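/- Let (X,d) be a complete and bounded metric space, I a nonempty finite set, φ : [0,∞) → [0,∞) a comparison function, and for each i ∈ I let f_i : X → X be a φ-contraction. For each infinite word α ∈ Λ(I), let a_α denote the unique element of ⋂_{n∈ℕ*} X_{[α]_n}. If α, β ∈ Λ(I) satisfy a_α ≠ a_β, then there exists n₀ ∈ ℕ* such that X_{[α]_{n₀}} ∩ X_{[β]_{n₀}} = ∅. -/

import Mathlib

open Filter Topology Set

/-- `φ : [0,∞) → [0,∞)` is a comparison function: it maps `[0,∞)` into `[0,∞)`,
is increasing, satisfies `φ t < t` for `t > 0`, and is right-continuous. -/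
def IsComparisonFn (φ : ℝ → ℝ) : Prop :=
  (∀ t : ℝ, 0 ≤ t → 0 ≤ φ t) ∧
  MonotoneOn φ (Set.Ici (0 : ℝ)) ∧
  (∀ t : ℝ, 0 < t → φ t < t) ∧
  (∀ t : ℝ, 0 ≤ t → ContinuousWithinAt φ (Set.Ici t) t)

/-- `f_{α₁…αₙ} = f_{α₁} ∘ f_{α₂} ∘ … ∘ f_{αₙ}` (the identity for the empty word). -/
def WordMap {X I : Type*} (f : I → X → X) : List I → X → X
  | [] => id
  | i :: w => f i ∘ WordMap f w

/-- `[α]_n`: the finite word consisting of the first `n` letters of the infinite word `α`. -/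
def Pref {I : Type*} (α : ℕ → I) (n : ℕ) : List I := List.ofFn (fun k : Fin n => α (k : ℕ))

/-- `X_w = f_w(X)`, the image of the whole space under the word map. -/
def WordSet {X I : Type*} (f : I → X → X) (w : List I) : Set X := Set.range (WordMap f w)

/-- A family `(f_i)_{i ∈ I}` of self-maps of `X` has attractor if:
(a) for every infinite word `α`, `⋂ₙ X_{[α]ₙ}` has a unique element `a_α`;
(b) whenever `a_α ≠ a_β`, some `X_{[α]_{n₀}}` and `X_{[β]_{n₀}}` are disjoint. -/
def HasAttractor {X I : Type*} (f : I → X → X) : Prop :=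
  (∀ α : ℕ → I, ∃! a : X, ∀ n : ℕ, a ∈ WordSet f (Pref α n)) ∧
  (∀ α β : ℕ → I, ∀ a b : X,
    (∀ n : ℕ, a ∈ WordSet f (Pref α n)) → (∀ n : ℕ, b ∈ WordSet f (Pref β n)) →
    a ≠ b →
    ∃ n₀ : ℕ, WordSet f (Pref α n₀) ∩ WordSet f (Pref β n₀) = ∅)

lemma comparison_zero {φ : ℝ → ℝ} (hφ : IsComparisonFn φ) : φ 0 = 0 := by
  obtain ⟨h0, hmono, hlt, _⟩ := hφ
  have h1 : ∀ t : ℝ, 0 < t → φ 0 < t := fun t ht =>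
    lt_of_le_of_lt (hmono (Set.mem_Ici.mpr (le_refl (0:ℝ))) ht.le ht.le) (hlt t ht)
  have : φ 0 ≤ 0 := by
    by_contra h
    exact absurd (h1 _ (lt_of_not_ge h)) (lt_irrefl _)
  linarith [h0 0 le_rfl]

lemma comparison_iter_lt {φ : ℝ → ℝ} (hφ : IsComparisonFn φ) (C : ℝ) (hC : 0 ≤ C) :
    ∀ ε > 0, ∃ n : ℕ, φ^[n] C < ε := by
  obtain ⟨h0, hmono, hlt, hrc⟩ := hφ
  set D : ℕ → ℝ := fun n => φ^[n] C with hD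
  have hDnn : ∀ n, 0 ≤ D n := by
    intro n; induction n with
    | zero => exact hC
    | succ n ih => simp only [hD, Function.iterate_succ_apply']; exact h0 _ ih
  have hDstep : ∀ n, D (n + 1) ≤ D n := by
    intro n
    have he : D (n+1) = φ (D n) := by simp [hD, Function.iterate_succ_apply']
    rw [he]
    rcases eq_or_lt_of_le (hDnn n) with h | h
    · rw [← h, comparison_zero ⟨h0, hmono, hlt, hrc⟩]
    · exact (hlt _ h).le
  have hanti : Antitone D := antitone_nat_of_succ_le hDstep
  have hbdd : BddBelow (Set.range D) := ⟨0, by rintro _ ⟨n, rfl⟩; exact hDnn n⟩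
  set L := ⨅ n, D n with hL
  have htend : Filter.Tendsto D Filter.atTop (nhds L) :=
    tendsto_atTop_ciInf hanti hbdd
  have hLge : ∀ n, L ≤ D n := fun n => ciInf_le hbdd n
  have hL0 : 0 ≤ L := le_ciInf hDnn
  have hLzero : L = 0 := by
    by_contra h
    have hLpos : 0 < L := lt_of_le_of_ne hL0 (Ne.symm h)
    have htendW : Filter.Tendsto D Filter.atTop (nhdsWithin L (Set.Ici L)) :=
      tendsto_nhdsWithin_of_tendsto_nhds_of_eventually_within D htend
        (Filter.Eventually.of_forall hLge)
    have htend2 : Filter.Tendsto (fun n => φ (D n)) Filter.atTop (nhds (φ L)) :=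
      (hrc L hL0).tendsto.comp htendW
    have htend3 : Filter.Tendsto (fun n => D (n + 1)) Filter.atTop (nhds L) :=
      htend.comp (Filter.tendsto_add_atTop_nat 1)
    have heq : (fun n => D (n + 1)) = fun n => φ (D n) := by
      funext n; simp [hD, Function.iterate_succ_apply']
    rw [heq] at htend3
    have : φ L = L := tendsto_nhds_unique htend2 htend3
    exact absurd this (ne_of_lt (hlt L hLpos))
  intro ε hε
  rw [hLzero] at htend
  exact (htend.eventually (gt_mem_nhds hε)).exists

/-- For an IFS of `φ`-contractions on a complete bounded metric space,
if `a_α ≠ a_β` then `X_{[α]_{n₀}}` and `X_{[β]_{n₀}}` are disjoint for some `n₀ ∈ ℕ*`. -/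
theorem ifs_separation {X I : Type*} [MetricSpace X] [CompleteSpace X] [Nonempty X]
    [Finite I] [Nonempty I]
    (hbdd : ∃ C : ℝ, ∀ x y : X, dist x y ≤ C)
    (φ : ℝ → ℝ) (hφ : IsComparisonFn φ)
    (f : I → X → X) (hf : ∀ i : I, ∀ x y : X, dist (f i x) (f i y) ≤ φ (dist x y)) :
    ∀ α β : ℕ → I, ∀ a b : X,
      (∀ n : ℕ, a ∈ WordSet f (Pref α n)) → (∀ n : ℕ, b ∈ WordSet f (Pref β n)) →
      a ≠ b →
      ∃ n₀ : ℕ, 0 < n₀ ∧ WordSet f (Pref α n₀) ∩ WordSet f (Pref β n₀) = ∅ := by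
  intro α β a b ha hb hab
  obtain ⟨C, hC⟩ := hbdd
  set C₀ : ℝ := max C 0 with hC₀
  have hC₀nn : 0 ≤ C₀ := le_max_right _ _
  have hC' : ∀ x y : X, dist x y ≤ C₀ := fun x y => (hC x y).trans (le_max_left _ _)
  obtain ⟨h0, hmono, hlt, hrc⟩ := hφ
  set D : ℕ → ℝ := fun n => φ^[n] C₀ with hD
  have hDnn : ∀ n, 0 ≤ D n := by
    intro n; induction n with
    | zero => exact hC₀nn
    | succ n ih => simp only [hD, Function.iterate_succ_apply']; exact h0 _ ih
  have hDstep : ∀ n, D (n + 1) ≤ D n := by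
    intro n
    have he : D (n+1) = φ (D n) := by simp [hD, Function.iterate_succ_apply']
    rw [he]
    rcases eq_or_lt_of_le (hDnn n) with h | h
    · rw [← h, comparison_zero ⟨h0, hmono, hlt, hrc⟩]
    · exact (hlt _ h).le
  have hanti : Antitone D := antitone_nat_of_succ_le hDstep
  -- diameter bound
  have hdiam : ∀ w : List I, ∀ x y : X,
      x ∈ WordSet f w → y ∈ WordSet f w → dist x y ≤ D w.length := by
    intro w
    induction w with
    | nil => intro x y _ _; exact hC' x y
    | cons i w ih =>
      rintro x y ⟨u, rfl⟩ ⟨v, rfl⟩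
      have h1 : dist (WordMap f w u) (WordMap f w v) ≤ D w.length :=
        ih _ _ ⟨u, rfl⟩ ⟨v, rfl⟩
      calc dist (WordMap f (i :: w) u) (WordMap f (i :: w) v)
          = dist (f i (WordMap f w u)) (f i (WordMap f w v)) := rfl
        _ ≤ φ (dist (WordMap f w u) (WordMap f w v)) := hf i _ _
        _ ≤ φ (D w.length) := hmono dist_nonneg (hDnn _) h1
        _ = D (w.length + 1) := by simp [hD, Function.iterate_succ_apply']
        _ = D (i :: w).length := by simp
  -- choose n with D n small
  have hd : 0 < dist a b := dist_pos.mpr hab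
  obtain ⟨n, hn⟩ := comparison_iter_lt ⟨h0, hmono, hlt, hrc⟩ C₀ hC₀nn
    (dist a b / 2) (by linarith)
  refine ⟨n + 1, Nat.succ_pos n, ?_⟩
  have hn1 : D (n + 1) < dist a b / 2 := lt_of_le_of_lt (hDstep n) hn
  ext z
  simp only [Set.mem_inter_iff, Set.mem_empty_iff_false, iff_false, not_and]
  intro hzα hzβ
  have hlen : (Pref α (n+1)).length = n + 1 := by simp [Pref]
  have hlenβ : (Pref β (n+1)).length = n + 1 := by simp [Pref]
  have h1 : dist a z ≤ D (n + 1) := by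
    have := hdiam (Pref α (n+1)) a z (ha (n+1)) hzα
    rwa [hlen] at this
  have h2 : dist b z ≤ D (n + 1) := by
    have := hdiam (Pref β (n+1)) b z (hb (n+1)) hzβ
    rwa [hlenβ] at this
  have : dist a b ≤ dist a z + dist z b := dist_triangle a z b
  rw [dist_comm z b] at this
  linarith
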